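/- For integers 4 ≤ s ≤ k−1, F(k,s) ≥ G(k − ⌈s/2⌉, ⌊s/2⌋). -/

import Mathlib

/-- `A ⊆ F₂^r` is a *generic `(r,s)`-erasure correcting set* if for every `r × s` matrix `M`
over `F₂` of rank `s` there is `a ∈ A` such that the row vector `a·M` has Hamming weight `1`. -/
def IsGenericSet (r s : ℕ) (A : Set (Fin r → ZMod 2)) : Prop :=
  ∀ M : Matrix (Fin r) (Fin s) (ZMod 2), M.rank = s →
    ∃ a ∈ A, hammingNorm (Matrix.vecMul a M) = 1

/-- `F(r,s)`: the minimum cardinality of a generic `(r,s)`-set. -/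
noncomputable def Fgen (r s : ℕ) : ℕ :=
  sInf {n | ∃ A : Finset (Fin r → ZMod 2), IsGenericSet r s ↑A ∧ A.card = n}

/-- The standard bilinear form `⟨x,y⟩ = ∑ i, x i * y i` on `F₂^r`. -/
def bform {r : ℕ} (x y : Fin r → ZMod 2) : ZMod 2 := ∑ i, x i * y i

/-- `A ⊆ F₂^r` is an *(r,s)-set* if for every `s` linearly independent vectors `v₁, …, v_s`
there is `c ∈ A` with `⟨c, v_j⟩ = 1` for all `j`. -/
def IsRSSet (r s : ℕ) (A : Set (Fin r → ZMod 2)) : Prop :=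
  ∀ v : Fin s → (Fin r → ZMod 2), LinearIndependent (ZMod 2) v →
    ∃ c ∈ A, ∀ j, bform c (v j) = 1

/-- `G₁(r,s)`: the minimum cardinality of an `(r,s)`-set. -/
noncomputable def G1 (r s : ℕ) : ℕ :=
  sInf {n | ∃ A : Finset (Fin r → ZMod 2), IsRSSet r s ↑A ∧ A.card = n}

/-- `A ⊆ F₂^r` is an *(r,s)-good set* if for every `s` linearly independent vectors
`v₁, …, v_s` and every `x ∈ F₂^s` there is `c ∈ A` with `⟨c, v_j⟩ = x j` for all `j`. -/
def IsGoodSet (r s : ℕ) (A : Set (Fin r → ZMod 2)) : Prop :=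
  ∀ v : Fin s → (Fin r → ZMod 2), LinearIndependent (ZMod 2) v →
    ∀ x : Fin s → ZMod 2, ∃ c ∈ A, ∀ j, bform c (v j) = x j

/-- `G(r,s)`: the minimum cardinality of an `(r,s)`-good set. -/
noncomputable def Ggood (r s : ℕ) : ℕ :=
  sInf {n | ∃ A : Finset (Fin r → ZMod 2), IsGoodSet r s ↑A ∧ A.card = n}

/-- A linear code `C ⊆ F₂^ι` is *s-wise intersecting* if every `s` linearly independent
codewords have a common coordinate where they are all nonzero. -/
def IsIntersectingCode {ι : Type*} (s : ℕ) (C : Submodule (ZMod 2) (ι → ZMod 2)) : Prop :=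
  ∀ u : Fin s → (ι → ZMod 2), (∀ j, u j ∈ C) → LinearIndependent (ZMod 2) u →
    ∃ i, ∀ j, u j i ≠ 0

/-- `n(k,s)`: the minimum length `n` for which an `s`-wise intersecting `[n,k]` code exists. -/
noncomputable def minIntLen (k s : ℕ) : ℕ :=
  sInf {n | ∃ C : Submodule (ZMod 2) (Fin n → ZMod 2),
    Module.finrank (ZMod 2) C = k ∧ IsIntersectingCode s C}

/-- The Gaussian binomial coefficient `[k choose s]₂` as a real number. -/
noncomputable def gaussBinom (k s : ℕ) : ℝ :=
  ∏ i ∈ Finset.range s, ((2:ℝ)^(k-i) - 1) / ((2:ℝ)^(s-i) - 1)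


section AuxiliaryLemmas
open Matrix

lemma zmod2_eq_one : ∀ {x : ZMod 2}, x ≠ 0 → x = 1 := by decide

lemma zmod2_eq_zero : ∀ {x : ZMod 2}, x ≠ 1 → x = 0 := by decide

lemma sum_single_mul {n : Type*} [Fintype n] [DecidableEq n] (j0 : n) (f : n → ZMod 2) :
    (∑ j, (Pi.single j0 1 : n → ZMod 2) j * f j) = f j0 := by
  rw [Finset.sum_eq_single j0]
  · rw [Pi.single_eq_same, one_mul]
  · intro b _ hb
    rw [Pi.single_eq_of_ne hb, zero_mul]
  · intro h; exact absurd (Finset.mem_univ j0) h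

lemma weight_one_single {s : ℕ} {q : Fin s → ZMod 2} (h : hammingNorm q = 1) :
    ∃ i, q = (Pi.single i 1 : Fin s → ZMod 2) := by
  rw [hammingNorm] at h
  obtain ⟨i, hi⟩ := Finset.card_eq_one.mp h
  refine ⟨i, funext fun j => ?_⟩
  by_cases hj : j = i
  · subst hj
    have hmem : j ∈ ({j} : Finset (Fin s)) := Finset.mem_singleton_self j
    rw [← hi, Finset.mem_filter] at hmem
    rw [Pi.single_eq_same]
    exact zmod2_eq_one hmem.2
  · have hmem : j ∉ ({i} : Finset (Fin s)) := by simp [hj]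
    rw [← hi, Finset.mem_filter] at hmem
    push_neg at hmem
    rw [Pi.single_eq_of_ne hj]
    by_contra hq
    exact hq (hmem (Finset.mem_univ j))

lemma hammingNorm_single' {s : ℕ} (i : Fin s) :
    hammingNorm (Pi.single i 1 : Fin s → ZMod 2) = 1 := by
  rw [hammingNorm]
  have : ({j | (Pi.single i 1 : Fin s → ZMod 2) j ≠ 0} : Finset (Fin s)) = {i} := by
    ext j
    simp only [Finset.mem_filter, Finset.mem_univ, true_and, Finset.mem_singleton]
    constructor
    · intro hj
      by_contra hji
      exact hj (Pi.single_eq_of_ne hji 1)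
    · intro hj; subst hj; rw [Pi.single_eq_same]; exact one_ne_zero
  rw [this, Finset.card_singleton]

lemma isGenericSet_univ (k s : ℕ) (hs : 0 < s) :
    IsGenericSet k s ↑(Finset.univ : Finset (Fin k → ZMod 2)) := by
  intro M hM
  have h1 : (Mᵀ).rank = s := by rw [Matrix.rank_transpose, hM]
  have h2 : LinearMap.range (Mᵀ).mulVecLin = ⊤ := by
    apply Submodule.eq_top_of_finrank_eq
    rw [show Module.finrank (ZMod 2) (LinearMap.range (Mᵀ).mulVecLin) = (Mᵀ).rank from rfl, h1,
      Module.finrank_fin_fun]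
  set i0 : Fin s := ⟨0, hs⟩
  have hmem : (Pi.single i0 1 : Fin s → ZMod 2) ∈ LinearMap.range (Mᵀ).mulVecLin := by
    rw [h2]; exact Submodule.mem_top
  obtain ⟨a, ha⟩ := hmem
  refine ⟨a, Finset.mem_coe.mpr (Finset.mem_univ a), ?_⟩
  have hv : Matrix.vecMul a M = Pi.single i0 1 := by
    rw [← Matrix.mulVec_transpose]
    rw [Matrix.mulVecLin_apply] at ha
    exact ha
  rw [hv, hammingNorm_single']

lemma star_lemma {k s : ℕ} {A : Finset (Fin k → ZMod 2)} (hA : IsGenericSet k s ↑A)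
    {ι : Type} [Fintype ι] [DecidableEq ι] (hcard : Fintype.card ι = s)
    (h : ι → Fin k → ZMod 2) (hli : LinearIndependent (ZMod 2) h) :
    ∃ w : ι → ZMod 2, w ≠ 0 ∧
      ∀ q : ι → ZMod 2, (∑ i, q i * w i) = 1 → ∃ a ∈ A, ∀ i, bform a (h i) = q i := by
  classical
  set P : Set (ι → ZMod 2) := {q | ∃ a ∈ A, ∀ i, bform a (h i) = q i} with hP
  let e : Fin s ≃ ι := (Fintype.equivFinOfCardEq hcard).symm
  -- Step 1 : every linearly independent family in F₂^ι meets P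
  have step1 : ∀ Y : Fin s → (ι → ZMod 2), LinearIndependent (ZMod 2) Y → ∃ j, Y j ∈ P := by
    intro Y hY
    set Ymat : Matrix (Fin s) (Fin s) (ZMod 2) := Matrix.of (fun j j' => Y j (e j')) with hYmat
    have hYrows : LinearIndependent (ZMod 2) (fun j => Ymat j) := by
      have h2 : (fun j => Ymat j)
          = fun j => (LinearEquiv.funCongrLeft (ZMod 2) (ZMod 2) e) (Y j) := rfl
      rw [h2]
      exact hY.map' _ (LinearMap.ker_eq_bot.mpr
        (LinearEquiv.funCongrLeft (ZMod 2) (ZMod 2) e).injective)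
    have hdet : IsUnit Ymat.det :=
      (Matrix.isUnit_iff_isUnit_det _).mp (Matrix.linearIndependent_rows_iff_isUnit.mp hYrows)
    set H : Matrix (Fin k) (Fin s) (ZMod 2) := Matrix.of (fun i j => h (e j) i) with hH
    have hHrank : H.rank = s := by
      rw [Matrix.rank_eq_finrank_span_cols]
      have hH2 : H.col = fun j => h (e j) := rfl
      rw [hH2]
      have hfr := finrank_span_eq_card (hli.comp e e.injective)
      rw [Fintype.card_fin] at hfr
      exact hfr
    set M : Matrix (Fin k) (Fin s) (ZMod 2) := H * Ymat⁻¹ with hM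
    have hMrank : M.rank = s := by
      rw [hM, Matrix.rank_mul_eq_left_of_isUnit_det _ _ (Matrix.isUnit_nonsing_inv_det _ hdet),
        hHrank]
    obtain ⟨a, haA, hwt⟩ := hA M hMrank
    obtain ⟨j0, hj0⟩ := weight_one_single hwt
    have h1 : Matrix.vecMul (Matrix.vecMul a H) Ymat⁻¹ = (Pi.single j0 1 : Fin s → ZMod 2) := by
      rw [Matrix.vecMul_vecMul, ← hM, hj0]
    have h2 : Matrix.vecMul a H = Matrix.vecMul (Pi.single j0 1 : Fin s → ZMod 2) Ymat := by
      rw [← h1, Matrix.vecMul_vecMul, Matrix.nonsing_inv_mul _ hdet, Matrix.vecMul_one]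
    have h3 : Matrix.vecMul (Pi.single j0 1 : Fin s → ZMod 2) Ymat = Ymat j0 := by
      funext j
      show (∑ l, (Pi.single j0 1 : Fin s → ZMod 2) l * Ymat l j) = Ymat j0 j
      exact sum_single_mul j0 (fun l => Ymat l j)
    refine ⟨j0, a, Finset.mem_coe.mp haA, fun i => ?_⟩
    have h4 := congrFun (h2.trans h3) (e.symm i)
    have h5 : Matrix.vecMul a H (e.symm i) = bform a (h (e (e.symm i))) := by
      show (∑ l, a l * H l (e.symm i)) = _
      rfl
    rw [h5, Equiv.apply_symm_apply] at h4
    rw [h4]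
    show Y j0 (e (e.symm i)) = Y j0 i
    rw [Equiv.apply_symm_apply]
  -- Step 2 : the complement of P spans a proper subspace
  have step2 : Submodule.span (ZMod 2) Pᶜ ≠ ⊤ := by
    intro htop
    obtain ⟨tset, htsub, htspan, htli⟩ := exists_linearIndependent (ZMod 2) Pᶜ
    rw [htop] at htspan
    let b : Module.Basis tset (ZMod 2) (ι → ZMod 2) :=
      Module.Basis.mk htli (by rw [Subtype.range_coe]; exact htspan.ge)
    haveI : Fintype tset := FiniteDimensional.fintypeBasisIndex b
    have hcardt : Fintype.card tset = s := by
      have hb := Module.finrank_eq_card_basis b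
      rw [Module.finrank_pi, hcard] at hb
      exact hb.symm
    let eT : tset ≃ Fin s := Fintype.equivFinOfCardEq hcardt
    have hYli : LinearIndependent (ZMod 2) (fun j : Fin s => ((eT.symm j : tset) : ι → ZMod 2)) :=
      htli.comp eT.symm eT.symm.injective
    obtain ⟨j, hj⟩ := step1 _ hYli
    exact (htsub (eT.symm j).2) hj
  -- Step 3 : produce the functional
  have hex : ∃ v0, v0 ∉ Submodule.span (ZMod 2) Pᶜ := by
    by_contra hc
    push_neg at hc
    exact step2 (Submodule.eq_top_iff'.mpr hc)
  obtain ⟨v0, hv0⟩ := hex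
  have hv0' : (Submodule.span (ZMod 2) Pᶜ).mkQ v0 ≠ 0 := by
    rw [Submodule.mkQ_apply, ne_eq, Submodule.Quotient.mk_eq_zero]
    exact hv0
  have hgex : ∃ g : Module.Dual (ZMod 2) ((ι → ZMod 2) ⧸ Submodule.span (ZMod 2) Pᶜ),
      g ((Submodule.span (ZMod 2) Pᶜ).mkQ v0) ≠ 0 := by
    by_contra hc
    push_neg at hc
    exact hv0' ((Module.forall_dual_apply_eq_zero_iff (ZMod 2) _).mp hc)
  obtain ⟨g, hg⟩ := hgex
  set φ : (ι → ZMod 2) →ₗ[ZMod 2] ZMod 2 := g ∘ₗ (Submodule.span (ZMod 2) Pᶜ).mkQ with hφ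
  have hφP : ∀ q ∈ Pᶜ, φ q = 0 := by
    intro q hq
    have : (Submodule.span (ZMod 2) Pᶜ).mkQ q = 0 := by
      rw [Submodule.mkQ_apply, Submodule.Quotient.mk_eq_zero]
      exact Submodule.subset_span hq
    rw [hφ, LinearMap.comp_apply, this, map_zero]
  set w : ι → ZMod 2 := fun i => φ (Pi.single i 1) with hw
  have hexp : ∀ q : ι → ZMod 2, φ q = ∑ i, q i * w i := by
    intro q
    calc φ q = φ (∑ i, Pi.single i (q i)) := by rw [Finset.univ_sum_single q]
      _ = ∑ i, φ (Pi.single i (q i)) := map_sum φ _ _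
      _ = ∑ i, q i * w i := by
          refine Finset.sum_congr rfl fun i _ => ?_
          have hsingle : (Pi.single i (q i) : ι → ZMod 2) = q i • (Pi.single i 1 : ι → ZMod 2) := by
            funext j
            by_cases hj : j = i
            · subst hj; simp
            · simp [Pi.single_eq_of_ne hj]
          rw [hsingle, LinearMap.map_smul, smul_eq_mul, hw]
  refine ⟨w, ?_, ?_⟩
  · intro hw0
    apply hg
    have hzero : φ v0 = 0 := by
      rw [hexp v0, hw0]
      simp
    rw [hφ, LinearMap.comp_apply] at hzero
    exact hzero
  · intro q hq1
    by_contra hqP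
    have hqc : q ∈ Pᶜ := hqP
    have := hφP q hqc
    rw [hexp q, hq1] at this
    exact one_ne_zero this

end AuxiliaryLemmas

/-- For `4 ≤ s ≤ k-1`, `F(k,s) ≥ G(k - ⌈s/2⌉, ⌊s/2⌋)`. -/
theorem statement12 (k s : ℕ) (hs : 4 ≤ s) (hsk : s ≤ k - 1) :
    Ggood (k - (s + 1) / 2) (s / 2) ≤ Fgen k s := by
  classical
  have hk5 : 5 ≤ k := by omega
  set t := s / 2 with ht
  set u := (s + 1) / 2 with hu
  set r' := k - u with hr'
  have htu : t + u = s := by omega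
  have htle : t ≤ u := by omega
  have huk : u ≤ k := by omega
  have hr'k : r' ≤ k := by omega
  have hmem : Fgen k s ∈
      {n | ∃ A : Finset (Fin k → ZMod 2), IsGenericSet k s ↑A ∧ A.card = n} :=
    Nat.sInf_mem ⟨(Finset.univ : Finset (Fin k → ZMod 2)).card, Finset.univ,
      isGenericSet_univ k s (by omega), rfl⟩
  obtain ⟨A, hA, hAcard⟩ := hmem
  suffices hsuff : ∃ B : Finset (Fin r' → ZMod 2), IsGoodSet r' t ↑B ∧ B.card ≤ A.card by
    obtain ⟨B, hBgood, hBcard⟩ := hsuff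
    have h1 : Ggood r' t ≤ B.card := Nat.sInf_le ⟨B, hBgood, rfl⟩
    omega
  -- the zero-padding linear map and the projection
  set padLM : (Fin r' → ZMod 2) →ₗ[ZMod 2] (Fin k → ZMod 2) :=
    { toFun := fun vv i => if hi : (i : ℕ) < r' then vv ⟨i, hi⟩ else 0
      map_add' := by
        intro v1 v2
        funext i
        by_cases hi : (i : ℕ) < r' <;> simp [hi]
      map_smul' := by
        intro cc v1
        funext i
        by_cases hi : (i : ℕ) < r' <;> simp [hi] } with hpadLM
  have hpad_eval : ∀ (vv : Fin r' → ZMod 2) (l : Fin r'), padLM vv (Fin.castLE hr'k l) = vv l := by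
    intro vv l
    show (if hi : ((Fin.castLE hr'k l : Fin k) : ℕ) < r' then vv ⟨_, hi⟩ else 0) = vv l
    rw [dif_pos (show ((Fin.castLE hr'k l : Fin k) : ℕ) < r' from l.isLt)]
    exact congrArg vv (Fin.ext rfl)
  have hpadker : LinearMap.ker padLM = ⊥ := by
    rw [LinearMap.ker_eq_bot']
    intro vv hvv
    funext l
    have h1 := congrFun hvv (Fin.castLE hr'k l)
    rw [hpad_eval] at h1
    simpa using h1
  set π : (Fin k → ZMod 2) → (Fin r' → ZMod 2) := fun a l => a (Fin.castLE hr'k l) with hπ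
  have hbform_pad : ∀ (a : Fin k → ZMod 2) (vv : Fin r' → ZMod 2),
      bform a (padLM vv) = bform (π a) vv := by
    intro a vv
    show (∑ i, a i * padLM vv i) = ∑ l, π a l * vv l
    rw [← Finset.sum_subset (Finset.subset_univ
      ((Finset.univ : Finset (Fin r')).image (Fin.castLE hr'k)))]
    · rw [Finset.sum_image (fun x _ y _ hxy => Fin.castLE_injective hr'k hxy)]
      refine Finset.sum_congr rfl fun l _ => ?_
      rw [hpad_eval]
    · intro i _ hi
      have hnot : ¬ (i : ℕ) < r' := by
        intro hlt
        exact hi (Finset.mem_image.mpr ⟨⟨i, hlt⟩, Finset.mem_univ _, Fin.ext rfl⟩)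
      show a i * (if hi2 : (i : ℕ) < r' then vv ⟨i, hi2⟩ else 0) = 0
      rw [dif_neg hnot, mul_zero]
  by_cases hgood : IsGoodSet r' t ↑(A.image π)
  · exact ⟨A.image π, hgood, Finset.card_image_le⟩
  unfold IsGoodSet at hgood
  push_neg at hgood
  obtain ⟨v, hvli, x, hdef⟩ := hgood
  set vt : Fin t → (Fin k → ZMod 2) := fun j => padLM (v j) with hvt
  have hvtli : LinearIndependent (ZMod 2) vt := hvli.map' padLM hpadker
  have hdefk : ∀ a ∈ A, ¬ (∀ j, bform a (vt j) = x j) := by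
    intro a haA hall
    obtain ⟨j, hj⟩ := hdef (π a) (Finset.mem_coe.mpr (Finset.mem_image_of_mem π haA))
    exact hj (by rw [← hbform_pad]; exact hall j)
  -- a complement of the span of the lifted v's
  set Vt : Submodule (ZMod 2) (Fin k → ZMod 2) := Submodule.span (ZMod 2) (Set.range vt)
    with hVt
  obtain ⟨Z, hZcompl⟩ := Submodule.exists_isCompl Vt
  have hfinVt : Module.finrank (ZMod 2) Vt = t := by
    rw [hVt]
    have h1 := finrank_span_eq_card hvtli
    rw [Fintype.card_fin] at h1
    exact h1
  have hfinZ : Module.finrank (ZMod 2) Z = k - t := by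
    have hsum := Submodule.finrank_add_eq_of_isCompl hZcompl
    rw [hfinVt, Module.finrank_fin_fun] at hsum
    omega
  let bZ : Module.Basis (Fin (k - t)) (ZMod 2) Z := Module.finBasisOfFinrankEq (ZMod 2) Z hfinZ
  set bb : Fin (k - t) → (Fin k → ZMod 2) := fun j => (bZ j : Fin k → ZMod 2) with hbb
  have hbbli : LinearIndependent (ZMod 2) bb :=
    bZ.linearIndependent.map' Z.subtype (Submodule.ker_subtype Z)
  have hbbZ : ∀ j, bb j ∈ Z := fun j => (bZ j).2
  have hr'kt : r' ≤ k - t := by omega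
  -- the embedding θ of F₂^{r'} into Z
  set th : (Fin r' → ZMod 2) →ₗ[ZMod 2] (Fin k → ZMod 2) :=
    { toFun := fun ww => ∑ l, ww l • bb (Fin.castLE hr'kt l)
      map_add' := by
        intro w1 w2
        rw [← Finset.sum_add_distrib]
        refine Finset.sum_congr rfl fun l _ => ?_
        rw [Pi.add_apply, add_smul]
      map_smul' := by
        intro cc ww
        show (∑ l, (cc • ww) l • bb (Fin.castLE hr'kt l))
            = (RingHom.id (ZMod 2)) cc • ∑ l, ww l • bb (Fin.castLE hr'kt l)
        rw [RingHom.id_apply, Finset.smul_sum]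
        refine Finset.sum_congr rfl fun l _ => ?_
        rw [Pi.smul_apply, smul_smul, smul_eq_mul] } with hth
  have hthZ : ∀ ww, th ww ∈ Z := by
    intro ww
    show (∑ l, ww l • bb (Fin.castLE hr'kt l)) ∈ Z
    exact Submodule.sum_mem _ fun l _ => Submodule.smul_mem _ _ (hbbZ _)
  have hbbcli : LinearIndependent (ZMod 2) (fun l : Fin r' => bb (Fin.castLE hr'kt l)) :=
    hbbli.comp _ (Fin.castLE_injective hr'kt)
  have hthker : LinearMap.ker th = ⊥ := by
    rw [LinearMap.ker_eq_bot']
    intro ww hww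
    have h1 := Fintype.linearIndependent_iff.mp hbbcli ww hww
    funext l
    exact h1 l
  have hthspan : ∀ ww, th ww ∈ Submodule.span (ZMod 2)
      (bb '' {j : Fin (k - t) | (j : ℕ) < r'}) := by
    intro ww
    show (∑ l, ww l • bb (Fin.castLE hr'kt l)) ∈ Submodule.span (ZMod 2)
      (bb '' {j : Fin (k - t) | (j : ℕ) < r'})
    apply Submodule.sum_mem
    intro l _
    exact Submodule.smul_mem _ _
      (Submodule.subset_span ⟨Fin.castLE hr'kt l, l.isLt, rfl⟩)
  set cmap : (Fin k → ZMod 2) → (Fin r' → ZMod 2) :=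
    fun a l => bform a (bb (Fin.castLE hr'kt l)) with hcmap
  have hcbform : ∀ a ww, bform (cmap a) ww = bform a (th ww) := by
    intro a ww
    have hthw : ∀ i, th ww i = ∑ l, ww l * bb (Fin.castLE hr'kt l) i := by
      intro i
      show (∑ l, ww l • bb (Fin.castLE hr'kt l)) i = _
      rw [Finset.sum_apply]
      exact Finset.sum_congr rfl fun l _ => by rw [Pi.smul_apply, smul_eq_mul]
    show (∑ l, cmap a l * ww l) = ∑ i, a i * th ww i
    calc (∑ l, cmap a l * ww l)
        = ∑ l, (∑ i, a i * bb (Fin.castLE hr'kt l) i) * ww l := rfl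
      _ = ∑ l, ∑ i, a i * (ww l * bb (Fin.castLE hr'kt l) i) := by
          refine Finset.sum_congr rfl fun l _ => ?_
          rw [Finset.sum_mul]
          exact Finset.sum_congr rfl fun i _ => by ring
      _ = ∑ i, ∑ l, a i * (ww l * bb (Fin.castLE hr'kt l) i) := Finset.sum_comm
      _ = ∑ i, a i * th ww i := by
          refine Finset.sum_congr rfl fun i _ => ?_
          rw [hthw i, Finset.mul_sum]
  refine ⟨A.image cmap, ?_, Finset.card_image_le⟩
  intro wv hwvli x'
  have hidx : ∀ i : Fin (u - t), k - u + (i : ℕ) < k - t := by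
    intro i
    have h1 := i.isLt
    omega
  set hfam : (Fin t ⊕ (Fin t ⊕ Fin (u - t))) → (Fin k → ZMod 2) :=
    Sum.elim vt (Sum.elim (fun i => th (wv i)) (fun i : Fin (u - t) => bb ⟨k - u + i, hidx i⟩))
    with hhfam
  have hcardι : Fintype.card (Fin t ⊕ (Fin t ⊕ Fin (u - t))) = s := by
    simp only [Fintype.card_sum, Fintype.card_fin]
    omega
  have hfali : LinearIndependent (ZMod 2) hfam := by
    rw [hhfam]
    refine LinearIndependent.sum_type hvtli ?_ ?_
    · refine LinearIndependent.sum_type (hwvli.map' th hthker)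
        (hbbli.comp _ ?_) ?_
      · intro i1 i2 h12
        have h13 := congrArg Fin.val h12
        simp only at h13
        exact Fin.ext (by omega)
      · refine Disjoint.mono ?_ ?_ (hbbli.disjoint_span_image
          (s := {j : Fin (k - t) | (j : ℕ) < r'}) (t := {j : Fin (k - t) | ¬ (j : ℕ) < r'}) ?_)
        · rw [Submodule.span_le]
          rintro _ ⟨i, rfl⟩
          exact hthspan (wv i)
        · rw [Submodule.span_le]
          rintro _ ⟨i, rfl⟩
          refine Submodule.subset_span ⟨⟨k - u + i, hidx i⟩, ?_, rfl⟩
          show ¬ (k - u + (i : ℕ) < r')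
          omega
        · rw [Set.disjoint_left]
          intro j hj hj'
          exact hj' hj
    · have hsub : Submodule.span (ZMod 2) (Set.range (Sum.elim (fun i => th (wv i))
          (fun i : Fin (u - t) => bb ⟨k - u + i, hidx i⟩))) ≤ Z := by
        rw [Submodule.span_le]
        rintro _ ⟨i, rfl⟩
        cases i with
        | inl i => exact hthZ (wv i)
        | inr i => exact hbbZ _
      have h2 : Disjoint (Submodule.span (ZMod 2) (Set.range vt)) Z := by
        rw [← hVt]
        exact hZcompl.disjoint
      exact h2.mono_right hsub
  obtain ⟨w0, hw0ne, hw0⟩ := star_lemma hA hcardι hfam hfali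
  have hHx : ∀ β : (Fin t ⊕ Fin (u - t)) → ZMod 2,
      (∑ i, Sum.elim x β i * w0 i) = 0 := by
    intro β
    by_contra hne
    obtain ⟨a, haA, ha⟩ := hw0 _ (zmod2_eq_one hne)
    refine hdefk a haA fun j => ?_
    have h1 := ha (Sum.inl j)
    simpa [hhfam] using h1
  have hsplit : ∀ q : (Fin t ⊕ (Fin t ⊕ Fin (u - t))) → ZMod 2,
      (∑ i, q i * w0 i) = (∑ j, q (Sum.inl j) * w0 (Sum.inl j))
        + (∑ j', q (Sum.inr j') * w0 (Sum.inr j')) := by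
    intro q
    exact Fintype.sum_sum_type _
  have hT : (∑ j, x j * w0 (Sum.inl j)) = 0 := by
    have h0 := hHx 0
    rw [hsplit] at h0
    simpa using h0
  have hbot : ∀ j', w0 (Sum.inr j') = 0 := by
    intro j'
    have h1 := hHx (Pi.single j' 1)
    rw [hsplit] at h1
    simp only [Sum.elim_inl, Sum.elim_inr, Pi.single_apply, ite_mul, one_mul, zero_mul,
      Finset.sum_ite_eq', Finset.mem_univ, if_true] at h1
    rw [hT, zero_add] at h1
    exact h1
  obtain ⟨jstar, hjstar⟩ : ∃ j : Fin t, w0 (Sum.inl j) ≠ 0 := by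
    by_contra hcon
    push_neg at hcon
    apply hw0ne
    funext i
    cases i with
    | inl j => exact hcon j
    | inr j' => exact hbot j'
  set qs : (Fin t ⊕ (Fin t ⊕ Fin (u - t))) → ZMod 2 :=
    Sum.elim (Pi.single jstar 1) (Sum.elim x' 0) with hqsdef
  have hqs1 : (∑ i, qs i * w0 i) = 1 := by
    rw [hsplit]
    have h2 : (∑ j', qs (Sum.inr j') * w0 (Sum.inr j')) = 0 :=
      Finset.sum_eq_zero fun j' _ => by rw [hbot, mul_zero]
    have h3 : (∑ j, qs (Sum.inl j) * w0 (Sum.inl j)) = 1 := by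
      simp only [hqsdef, Sum.elim_inl, Pi.single_apply, ite_mul, one_mul, zero_mul,
        Finset.sum_ite_eq', Finset.mem_univ, if_true]
      exact zmod2_eq_one hjstar
    rw [h2, h3, add_zero]
  obtain ⟨a, haA, ha⟩ := hw0 _ hqs1
  refine ⟨cmap a, Finset.mem_coe.mpr (Finset.mem_image_of_mem cmap haA), fun j => ?_⟩
  rw [hcbform]
  have h1 := ha (Sum.inr (Sum.inl j))
  simpa [hhfam, hqsdef] using h1
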